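/- Let n ≥ 1 and let H be a normalised Hadamard matrix of order n with rows [1, h_1], …, [1, h_n], so that h_1, …, h_n ∈ ℝ^{n−1} form a Hadamard simplex. Let p ∈ [1,∞), let X be a normed space and let u ∈ X. Suppose (x_1, …, x_{n−1}) ∈ X ⊕_p ⋯ ⊕_p X (n−1 summands) has the same distance to each of the n points h_i ⊗ u := (h_i^{(1)}u, …, h_i^{(n−1)}u). Then ‖x_j − u‖ = ‖x_j + u‖ for all j ∈ [n−1]. -/

import Mathlib

/-- An `n × n` real matrix is a Hadamard matrix if every entry is `±1` and
`H * Hᵀ = n • 1`. -/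
def IsHadamardMatrix {n : ℕ} (H : Matrix (Fin n) (Fin n) ℝ) : Prop :=
  (∀ i j, H i j = 1 ∨ H i j = -1) ∧ H * H.transpose = (n : ℝ) • 1

/-- Let `H` be a normalised Hadamard matrix of order `n ≥ 1` (all entries
of its `0`-th column equal `1`), with rows `[1, h_i]`, so `h_i j = H i (j+1)` for
`j ∈ Fin (n−1)`. Let `p ∈ [1, ∞)`, let `X` be a normed space and `u ∈ X`. If
`(x_1, …, x_{n−1})` in the `ℓ_p`-sum of `n−1` copies of `X` has the same distance `c` to
each of the `n` points `h_i ⊗ u = (h_i^{(1)}u, …, h_i^{(n−1)}u)`, then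
`‖x_j − u‖ = ‖x_j + u‖` for all `j`. -/
theorem statement14 (n : ℕ) (hn : 1 ≤ n)
    (H : Matrix (Fin n) (Fin n) ℝ) (hHad : IsHadamardMatrix H)
    (hnorm : ∀ i : Fin n, H i ⟨0, hn⟩ = 1)
    (p : ℝ) (hp : 1 ≤ p)
    (X : Type*) [NormedAddCommGroup X] [NormedSpace ℝ X]
    (u : X) (x : Fin (n - 1) → X) (c : ℝ)
    (hdist : ∀ i : Fin n,
      (∑ j : Fin (n - 1),
          ‖x j - H i ⟨(j : ℕ) + 1, by have := j.isLt; omega⟩ • u‖ ^ p) ^ (1 / p) = c) :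
    ∀ j : Fin (n - 1), ‖x j - u‖ = ‖x j + u‖ := by
  obtain ⟨m, rfl⟩ : ∃ m, n = m + 1 := ⟨n - 1, by omega⟩
  obtain ⟨hpm, hHH⟩ := hHad
  have hp0 : p ≠ 0 := by linarith
  set a : Fin m → ℝ := fun j => ‖x j - u‖ ^ p with ha
  set b : Fin m → ℝ := fun j => ‖x j + u‖ ^ p with hb
  -- each term of the sum
  have hterm : ∀ (i : Fin (m + 1)) (j : Fin m),
      ‖x j - H i j.succ • u‖ ^ p
        = (1 + H i j.succ) / 2 * a j + (1 - H i j.succ) / 2 * b j := by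
    intro i j
    rcases hpm i j.succ with h | h <;> rw [h]
    · rw [one_smul]; ring_nf; rfl
    · rw [neg_smul, one_smul, sub_neg_eq_add]; ring_nf; rfl
  -- the sums are all equal to c ^ p
  have hsum : ∀ i : Fin (m + 1),
      (∑ j : Fin m, (‖x j - H i j.succ • u‖ ^ p)) = c ^ p := by
    intro i
    have hd : (∑ j : Fin m, (‖x j - H i j.succ • u‖ ^ p)) ^ (1 / p) = c := hdist i
    have h0 : (0:ℝ) ≤ ∑ j : Fin m, (‖x j - H i j.succ • u‖ ^ p) :=
      Finset.sum_nonneg fun j _ => Real.rpow_nonneg (norm_nonneg _) p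
    have := Real.rpow_inv_rpow h0 hp0
    rw [← one_div, hd] at this
    exact this.symm
  -- consequently the "signed sums" are constant
  have hTval : ∀ i : Fin (m + 1),
      (∑ j : Fin m, H i j.succ * (a j - b j))
        = 2 * c ^ p - ∑ j : Fin m, (a j + b j) := by
    intro i
    have h1 : (∑ j : Fin m, H i j.succ * (a j - b j))
        = ∑ j : Fin m,
            (2 * ((1 + H i j.succ) / 2 * a j + (1 - H i j.succ) / 2 * b j)
              - (a j + b j)) := by
      refine Finset.sum_congr rfl fun j _ => by ring
    rw [h1, Finset.sum_sub_distrib, ← Finset.mul_sum]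
    have h2 : (∑ j : Fin m, ((1 + H i j.succ) / 2 * a j + (1 - H i j.succ) / 2 * b j))
        = c ^ p := by
      rw [← hsum i]
      exact Finset.sum_congr rfl fun j _ => (hterm i j).symm
    rw [h2]
  -- the vector w
  set C : ℝ := 2 * c ^ p - ∑ j : Fin m, (a j + b j) with hC
  set w : Fin (m + 1) → ℝ := Fin.cons (-C) (fun j => a j - b j) with hw
  have h0col : ∀ i : Fin (m + 1), H i 0 = 1 := by
    intro i
    have := hnorm i
    rwa [Fin.mk_zero] at this
  have hmv : H.mulVec w = 0 := by
    funext i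
    simp only [Matrix.mulVec, dotProduct, Pi.zero_apply]
    rw [Fin.sum_univ_succ]
    simp only [hw, Fin.cons_zero, Fin.cons_succ, h0col i, Pi.zero_apply]
    rw [hTval i]
    ring
  -- H is invertible; in fact Hᵀ * H = (m+1) • 1
  have hmne : ((m : ℝ) + 1) ≠ 0 := by positivity
  have hcast : ((m + 1 : ℕ) : ℝ) = (m : ℝ) + 1 := by push_cast; ring
  have h1 : H * (((m : ℝ) + 1)⁻¹ • H.transpose) = 1 := by
    rw [Matrix.mul_smul, hHH, hcast, smul_smul, inv_mul_cancel₀ hmne, one_smul]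
  have h2 : (((m : ℝ) + 1)⁻¹ • H.transpose) * H = 1 := mul_eq_one_comm.mp h1
  have hHt : H.transpose * H = ((m : ℝ) + 1) • (1 : Matrix (Fin (m+1)) (Fin (m+1)) ℝ) := by
    calc H.transpose * H
        = ((m : ℝ) + 1) • ((((m : ℝ) + 1)⁻¹ • H.transpose) * H) := by
          rw [Matrix.smul_mul, smul_smul, mul_inv_cancel₀ hmne, one_smul]
      _ = _ := by rw [h2]
  -- hence w = 0
  have hw0 : w = 0 := by
    have h3 : (H.transpose * H).mulVec w = 0 := by
      rw [← Matrix.mulVec_mulVec, hmv, Matrix.mulVec_zero]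
    rw [hHt, Matrix.smul_mulVec, Matrix.one_mulVec] at h3
    rcases smul_eq_zero.mp h3 with h | h
    · exact absurd h hmne
    · exact h
  -- conclude
  intro j
  have hab : a j = b j := by
    have := congrFun hw0 j.succ
    simp only [hw, Fin.cons_succ, Pi.zero_apply] at this
    linarith
  have h1 : ((‖x j - u‖ ^ p) ^ p⁻¹ : ℝ) = ‖x j - u‖ :=
    Real.rpow_rpow_inv (norm_nonneg _) hp0
  have h2 : ((‖x j + u‖ ^ p) ^ p⁻¹ : ℝ) = ‖x j + u‖ :=
    Real.rpow_rpow_inv (norm_nonneg _) hp0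
  rw [← h1, ← h2]
  rw [show (‖x j - u‖ ^ p : ℝ) = a j from rfl, show (‖x j + u‖ ^ p : ℝ) = b j from rfl, hab]
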